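/- (Mean-value Poincaré inequality.) Let (Ω,d,μ) be a metric measure space with μ(Ω) < ∞ whose isoperimetric profile I is concave, continuous, I(0) = 0, strictly positive on (0, μ(Ω)), symmetric about μ(Ω)/2, and increasing on (0, μ(Ω)/2]. Let f : Ω → ℝ be Lipschitz and integrable with |∇f| integrable, and assume the co-area inequality for f: ∫_{−∞}^{∞} I(μ{f > s}) ds ≤ ∫_Ω |∇f| dμ. Then ∫_Ω |f − (1/μ(Ω))∫_Ω f dμ| dμ ≤ [μ(Ω)/I(μ(Ω)/2)] · ∫_Ω |∇f| dμ. -/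

import Mathlib

open MeasureTheory Filter Set Topology
open scoped ENNReal NNReal

/-- The modulus of the gradient of `f` at `x`:
`|∇f|(x) = limsup_{y→x} |f(x) - f(y)| / d(x,y)`. -/
noncomputable def gradMod {Ω : Type*} [MetricSpace Ω] (f : Ω → ℝ) (x : Ω) : ℝ :=
  Filter.limsup (fun y => |f x - f y| / dist x y) (𝓝[≠] x)

/-- The Minkowski content (perimeter) of a set `A`:
`μ⁺(A) = liminf_{h→0⁺} (μ(A_h) - μ(A))/h`, where `A_h` is the open `h`-thickening of `A`. -/
noncomputable def minkContent {Ω : Type*} [MetricSpace Ω] [MeasurableSpace Ω]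
    (μ : Measure Ω) (A : Set Ω) : ℝ≥0∞ :=
  Filter.liminf (fun h : ℝ => (μ (Metric.thickening h A) - μ A) / ENNReal.ofReal h)
    (𝓝[>] (0 : ℝ))

/-- The isoperimetric profile of `(Ω,d,μ)`:
`I(t) = inf {μ⁺(A) : A Borel, μ(A) = t}`. -/
noncomputable def isoProfile {Ω : Type*} [MetricSpace Ω] [MeasurableSpace Ω]
    (μ : Measure Ω) (t : ℝ≥0∞) : ℝ≥0∞ :=
  ⨅ (A : Set Ω) (_ : MeasurableSet A) (_ : μ A = t), minkContent μ A

/-- `m` is a median of `f` with respect to `μ`. -/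
def IsMedian {Ω : Type*} [MeasurableSpace Ω] (μ : Measure Ω) (f : Ω → ℝ) (m : ℝ) : Prop :=
  μ Set.univ / 2 ≤ μ {x | m ≤ f x} ∧ μ Set.univ / 2 ≤ μ {x | f x ≤ m}

/-- The modulus of the gradient of a Lipschitz function is nonnegative. -/
lemma gradMod_nonneg' {Ω : Type*} [MetricSpace Ω] {K : ℝ≥0} {f : Ω → ℝ}
    (hlip : LipschitzWith K f) (x : Ω) : 0 ≤ gradMod f x := by
  rw [gradMod]
  rcases (𝓝[≠] x).eq_or_neBot with h | h
  · rw [h, Filter.limsup_eq]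
    simp only [eventually_bot, setOf_true]
    rw [Real.sInf_of_not_bddBelow not_bddBelow_univ]
  · refine le_limsup_of_frequently_le
      (Frequently.of_forall fun y => div_nonneg (abs_nonneg _) dist_nonneg) ?_
    refine isBoundedUnder_of ⟨(K : ℝ), fun y => ?_⟩
    rcases eq_or_lt_of_le (dist_nonneg (x := x) (y := y)) with hd | hd
    · have h0 : |f x - f y| = 0 := by
        have h1 := hlip.dist_le_mul x y
        rw [Real.dist_eq] at h1
        have h2 : |f x - f y| ≤ 0 := by rw [← hd] at h1; simpa using h1
        linarith [abs_nonneg (f x - f y)]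
      simp [h0, ← hd]
    · rw [div_le_iff₀ hd]
      have := hlip.dist_le_mul x y
      rwa [Real.dist_eq] at this

/-- The chord bound for a concave function vanishing at `0`. -/
lemma concave_chord {M : ℝ} (hM : 0 < M) {I : ℝ → ℝ} (hconc : ConcaveOn ℝ (Icc 0 M) I)
    (hI0 : I 0 = 0) {t : ℝ} (ht0 : 0 ≤ t) (ht : t ≤ M / 2) :
    2 * I (M / 2) / M * t ≤ I t := by
  have hmem1 : (M / 2 : ℝ) ∈ Icc (0:ℝ) M := ⟨by linarith, by linarith⟩
  have hmem0 : (0 : ℝ) ∈ Icc (0:ℝ) M := ⟨le_refl _, hM.le⟩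
  have ha : (0:ℝ) ≤ 2 * t / M := by positivity
  have hb : (0:ℝ) ≤ 1 - 2 * t / M := by
    have : 2 * t / M ≤ 1 := by rw [div_le_one hM]; linarith
    linarith
  have hab : 2 * t / M + (1 - 2 * t / M) = 1 := by ring
  have := hconc.2 hmem1 hmem0 ha hb hab
  have hx : (2 * t / M) • (M / 2) + (1 - 2 * t / M) • (0:ℝ) = t := by
    simp only [smul_eq_mul]
    field_simp
    ring
  rw [hx] at this
  simp only [smul_eq_mul, hI0, mul_zero, add_zero] at this
  calc 2 * I (M / 2) / M * t = 2 * t / M * I (M / 2) := by ring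
    _ ≤ I t := this

/-- Existence of a median for a measurable function on a nonzero finite measure space. -/
lemma exists_median' {Ω : Type*} [MeasurableSpace Ω] (μ : Measure Ω) [IsFiniteMeasure μ]
    (hμ : μ Set.univ ≠ 0) {f : Ω → ℝ} (hf : Measurable f) :
    ∃ m : ℝ, μ Set.univ / 2 ≤ μ {x | m ≤ f x} ∧ μ Set.univ / 2 ≤ μ {x | f x ≤ m} := by
  set half := μ Set.univ / 2 with hhalf
  have hhalf_lt : half < μ Set.univ := ENNReal.half_lt_self hμ (measure_ne_top μ _)
  have hhalf_pos : 0 < half := ENNReal.half_pos hμ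
  set S : Set ℝ := {s : ℝ | half ≤ μ {x | f x ≤ s}} with hS
  have hSne : S.Nonempty := by
    have hmono : Monotone (fun n : ℕ => {x | f x ≤ (n : ℝ)}) := by
      intro a b hab x hx
      simp only [mem_setOf_eq] at hx ⊢
      exact hx.trans (Nat.cast_le.mpr hab)
    have hunion : (⋃ n : ℕ, {x | f x ≤ (n : ℝ)}) = univ := by
      ext x; simp only [mem_iUnion, mem_setOf_eq, mem_univ, iff_true]
      obtain ⟨n, hn⟩ := exists_nat_ge (f x)
      exact ⟨n, hn⟩
    have ht : Tendsto (μ ∘ fun n : ℕ => {x | f x ≤ (n : ℝ)}) atTop (𝓝 (μ univ)) := by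
      have := tendsto_measure_iUnion_atTop (μ := μ) hmono
      rwa [hunion] at this
    have := (ht.eventually (eventually_gt_nhds hhalf_lt)).exists
    obtain ⟨n, hn⟩ := this
    exact ⟨(n : ℝ), hn.le⟩
  have hSbdd : BddBelow S := by
    have hanti : Antitone (fun n : ℕ => {x | f x ≤ -(n : ℝ)}) := by
      intro a b hab x hx
      simp only [mem_setOf_eq] at hx ⊢
      exact hx.trans (neg_le_neg (Nat.cast_le.mpr hab))
    have hinter : (⋂ n : ℕ, {x | f x ≤ -(n : ℝ)}) = ∅ := by
      ext x; simp only [mem_iInter, mem_setOf_eq, mem_empty_iff_false, iff_false, not_forall,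
        not_le]
      obtain ⟨n, hn⟩ := exists_nat_gt (-f x)
      exact ⟨n, by linarith⟩
    have ht : Tendsto (μ ∘ fun n : ℕ => {x | f x ≤ -(n : ℝ)}) atTop (𝓝 0) := by
      have := tendsto_measure_iInter_atTop (μ := μ)
        (s := fun n : ℕ => {x | f x ≤ -(n : ℝ)})
        (fun n => (hf measurableSet_Iic).nullMeasurableSet) hanti
        ⟨0, measure_ne_top μ _⟩
      rwa [hinter, measure_empty] at this
    obtain ⟨n, hn⟩ := (ht.eventually (eventually_lt_nhds hhalf_pos)).exists
    refine ⟨-(n:ℝ), fun s hs => ?_⟩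
    by_contra hcon
    push_neg at hcon
    have : μ {x | f x ≤ s} ≤ μ {x | f x ≤ -(n:ℝ)} :=
      measure_mono (fun x hx => le_trans hx hcon.le)
    exact absurd (le_trans hs this) (not_le.mpr hn)
  set m := sInf S with hm
  refine ⟨m, ?_, ?_⟩
  · have hsets : {x | m ≤ f x} = ⋂ k : ℕ, {x | m - 1/(k+1) < f x} := by
      ext x
      simp only [mem_setOf_eq, mem_iInter]
      constructor
      · intro h k
        have : (0:ℝ) < 1/(k+1) := by positivity
        linarith
      · intro h
        by_contra hcon
        push_neg at hcon
        obtain ⟨k, hk⟩ := exists_nat_one_div_lt (show (0:ℝ) < m - f x by linarith)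
        have := h k
        linarith
    have hanti : Antitone (fun k : ℕ => {x | m - 1/(k+1) < f x}) := by
      intro a b hab x hx
      simp only [mem_setOf_eq] at hx ⊢
      have : (1:ℝ)/(b+1) ≤ 1/(a+1) := by
        apply one_div_le_one_div_of_le (by positivity)
        have := (Nat.cast_le (α := ℝ)).mpr hab; linarith
      linarith
    have ht : Tendsto (μ ∘ fun k : ℕ => {x | m - 1/(k+1) < f x}) atTop (𝓝 (μ {x | m ≤ f x})) := by
      have := tendsto_measure_iInter_atTop (μ := μ)
        (s := fun k : ℕ => {x | m - 1/(k+1) < f x})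
        (fun k => (hf measurableSet_Ioi).nullMeasurableSet) hanti ⟨0, measure_ne_top μ _⟩
      rwa [← hsets] at this
    refine ge_of_tendsto ht (Eventually.of_forall fun k => ?_)
    have hnotS : (m - 1/(k+1)) ∉ S := by
      intro hmem
      have := csInf_le hSbdd hmem
      have hk : (0:ℝ) < 1/(k+1) := by positivity
      rw [← hm] at this
      linarith
    have hlt : μ {x | f x ≤ m - 1/(k+1)} < half := not_le.mp hnotS
    have hcompl : {x | m - 1/(k+1) < f x} = {x | f x ≤ m - 1/(k+1)}ᶜ := by
      ext x; simp [not_le]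
    simp only [Function.comp_apply]
    rw [hcompl, measure_compl (s := {x | f x ≤ m - 1/(k+1)}) (hf measurableSet_Iic)
      (measure_ne_top μ _)]
    calc half = μ univ - half := (ENNReal.sub_half (measure_ne_top μ _)).symm
      _ ≤ μ univ - μ {x | f x ≤ m - 1/(k+1)} := tsub_le_tsub_left hlt.le _
  · have hsets : {x | f x ≤ m} = ⋂ k : ℕ, {x | f x ≤ m + 1/(k+1)} := by
      ext x
      simp only [mem_setOf_eq, mem_iInter]
      constructor
      · intro h k
        have : (0:ℝ) < 1/(k+1) := by positivity
        linarith
      · intro h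
        by_contra hcon
        push_neg at hcon
        obtain ⟨k, hk⟩ := exists_nat_one_div_lt (show (0:ℝ) < f x - m by linarith)
        have := h k
        linarith
    have hanti : Antitone (fun k : ℕ => {x | f x ≤ m + 1/(k+1)}) := by
      intro a b hab x hx
      simp only [mem_setOf_eq] at hx ⊢
      have : (1:ℝ)/(b+1) ≤ 1/(a+1) := by
        apply one_div_le_one_div_of_le (by positivity)
        have := (Nat.cast_le (α := ℝ)).mpr hab; linarith
      linarith
    have ht : Tendsto (μ ∘ fun k : ℕ => {x | f x ≤ m + 1/(k+1)}) atTop (𝓝 (μ {x | f x ≤ m})) := by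
      have := tendsto_measure_iInter_atTop (μ := μ)
        (s := fun k : ℕ => {x | f x ≤ m + 1/(k+1)})
        (fun k => (hf measurableSet_Iic).nullMeasurableSet) hanti ⟨0, measure_ne_top μ _⟩
      rwa [← hsets] at this
    refine ge_of_tendsto ht (Eventually.of_forall fun k => ?_)
    have hk : (0:ℝ) < 1/(k+1) := by positivity
    obtain ⟨s, hsS, hslt⟩ : ∃ s ∈ S, s < m + 1/(k+1) := by
      have : sInf S < m + 1/(k+1) := by rw [← hm]; linarith
      exact exists_lt_of_csInf_lt hSne this
    calc half ≤ μ {x | f x ≤ s} := hsS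
      _ ≤ μ {x | f x ≤ m + 1/(k+1)} := measure_mono fun x hx => le_trans hx hslt.le

/-- **mean-value Poincaré inequality.** On a finite metric measure space whose
isoperimetric profile `I` is concave, continuous, zero at zero, positive on `(0, μ(Ω))`,
symmetric about `μ(Ω)/2` and increasing on `(0, μ(Ω)/2]`, every Lipschitz integrable `f`
with integrable modulus of gradient satisfying the co-area inequality obeys
`∫_Ω |f - (1/μ(Ω)) ∫_Ω f dμ| dμ ≤ (μ(Ω)/I(μ(Ω)/2)) ∫_Ω |∇f| dμ`. -/
theorem mean_value_poincare {Ω : Type*} [MetricSpace Ω] [MeasurableSpace Ω] [BorelSpace Ω]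
    (μ : Measure Ω) [IsFiniteMeasure μ] [IsFiniteMeasureOnCompacts μ]
    (I : ℝ → ℝ)
    (hIprof : ∀ t : ℝ, 0 ≤ t → ENNReal.ofReal t < μ Set.univ →
      ENNReal.ofReal (I t) = isoProfile μ (ENNReal.ofReal t))
    (hIconc : ConcaveOn ℝ (Set.Icc 0 (μ Set.univ).toReal) I)
    (hIcont : ContinuousOn I (Set.Icc 0 (μ Set.univ).toReal))
    (hI0 : I 0 = 0)
    (hIpos : ∀ t : ℝ, 0 < t → t < (μ Set.univ).toReal → 0 < I t)
    (hIsym : ∀ t ∈ Set.Icc 0 (μ Set.univ).toReal, I ((μ Set.univ).toReal - t) = I t)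
    (hImono : MonotoneOn I (Set.Ioc 0 ((μ Set.univ).toReal / 2)))
    (K : ℝ≥0) (f : Ω → ℝ) (hlip : LipschitzWith K f)
    (hfint : Integrable f μ) (hgint : Integrable (gradMod f) μ)
    (hcoarea : ∫⁻ s : ℝ, ENNReal.ofReal (I ((μ {x | s < f x}).toReal)) ≤
      ENNReal.ofReal (∫ x, gradMod f x ∂μ)) :
    ∫ x, |f x - (∫ y, f y ∂μ) / (μ Set.univ).toReal| ∂μ ≤
      ((μ Set.univ).toReal / I ((μ Set.univ).toReal / 2)) * ∫ x, gradMod f x ∂μ := by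
  by_cases hμ0 : μ Set.univ = 0
  · have hz : μ = 0 := Measure.measure_univ_eq_zero.mp hμ0
    simp [hz]
  set M : ℝ := (μ Set.univ).toReal with hMdef
  have hMpos : 0 < M := ENNReal.toReal_pos hμ0 (measure_ne_top μ _)
  have hfmeas : Measurable f := hlip.continuous.measurable
  obtain ⟨m, hm₁, hm₂⟩ := exists_median' μ hμ0 hfmeas
  set c : ℝ := 2 * I (M / 2) / M with hcdef
  have hIhalf : 0 < I (M / 2) := hIpos _ (by linarith) (by linarith)
  have hcpos : 0 < c := by rw [hcdef]; positivity
  set ν : ℝ → ℝ≥0∞ := fun s => μ {x | s < f x} with hνdef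
  set g : ℝ → ℝ≥0∞ := fun s => μ {x | f x ≤ s} with hgdef
  have hν_anti : Antitone ν := fun a b hab => measure_mono fun x hx => lt_of_le_of_lt hab hx
  have hν_meas : Measurable ν := hν_anti.measurable
  have hg_mono : Monotone g := fun a b hab => measure_mono fun x hx => le_trans hx hab
  have hg_meas : Measurable g := hg_mono.measurable
  have hν_top : ∀ s, ν s ≠ ∞ := fun s => measure_ne_top μ _
  have hg_top : ∀ s, g s ≠ ∞ := fun s => measure_ne_top μ _
  have hhalf_top : μ Set.univ / 2 ≠ ∞ :=
    (ENNReal.half_lt_self hμ0 (measure_ne_top μ _)).trans_le le_top |>.ne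
  have hhalfR : (μ Set.univ / 2).toReal = M / 2 := by
    rw [ENNReal.toReal_div]; norm_num; rfl
  -- bounds on the distribution function on either side of the median
  have hν_le : ∀ s, m < s → ν s ≤ μ Set.univ / 2 := by
    intro s hs
    calc ν s ≤ μ ({x | f x ≤ m}ᶜ) := measure_mono fun x hx => by
          simp only [mem_compl_iff, mem_setOf_eq, not_le]
          exact lt_trans hs hx
      _ = μ Set.univ - μ {x | f x ≤ m} :=
          measure_compl (s := {x | f x ≤ m}) (hfmeas measurableSet_Iic) (measure_ne_top μ _)
      _ ≤ μ Set.univ - μ Set.univ / 2 := tsub_le_tsub_left hm₂ _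
      _ = μ Set.univ / 2 := ENNReal.sub_half (measure_ne_top μ _)
  have hg_le : ∀ s, s < m → g s ≤ μ Set.univ / 2 := by
    intro s hs
    calc g s ≤ μ ({x | m ≤ f x}ᶜ) := measure_mono fun x hx => by
          simp only [mem_compl_iff, mem_setOf_eq, not_le]
          exact lt_of_le_of_lt hx hs
      _ = μ Set.univ - μ {x | m ≤ f x} :=
          measure_compl (s := {x | m ≤ f x}) (hfmeas measurableSet_Ici) (measure_ne_top μ _)
      _ ≤ μ Set.univ - μ Set.univ / 2 := tsub_le_tsub_left hm₁ _
      _ = μ Set.univ / 2 := ENNReal.sub_half (measure_ne_top μ _)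
  have hbound1 : ∀ s ∈ Ioi m, ENNReal.ofReal c * ν s ≤ ENNReal.ofReal (I ((ν s).toReal)) := by
    intro s hs
    have h2 : (ν s).toReal ≤ M / 2 := by
      have := ENNReal.toReal_mono hhalf_top (hν_le s hs)
      rwa [hhalfR] at this
    have h3 : c * (ν s).toReal ≤ I ((ν s).toReal) := by
      rw [hcdef]
      exact concave_chord hMpos hIconc hI0 ENNReal.toReal_nonneg h2
    calc ENNReal.ofReal c * ν s
        = ENNReal.ofReal (c * (ν s).toReal) := by
          rw [ENNReal.ofReal_mul hcpos.le, ENNReal.ofReal_toReal (hν_top s)]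
      _ ≤ _ := ENNReal.ofReal_le_ofReal h3
  have hbound2 : ∀ s ∈ Iio m, ENNReal.ofReal c * g s ≤ ENNReal.ofReal (I ((ν s).toReal)) := by
    intro s hs
    have hsum : g s + ν s = μ Set.univ := by
      have hdisj : Disjoint {x | f x ≤ s} {x | s < f x} := by
        rw [Set.disjoint_left]; intro x hx₁ hx₂
        simp only [mem_setOf_eq] at hx₁ hx₂
        linarith
      have hU : {x | f x ≤ s} ∪ {x | s < f x} = (univ : Set Ω) := by
        ext x; simp [le_or_gt]
      calc g s + ν s = μ ({x | f x ≤ s} ∪ {x | s < f x}) :=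
            (measure_union hdisj
              (show MeasurableSet {x | s < f x} from hfmeas measurableSet_Ioi)).symm
        _ = μ Set.univ := by rw [hU]
    have htr : (ν s).toReal = M - (g s).toReal := by
      have : (g s).toReal + (ν s).toReal = M := by
        rw [← ENNReal.toReal_add (hg_top s) (hν_top s), hsum]
      linarith
    have hgle : (g s).toReal ≤ M / 2 := by
      have := ENNReal.toReal_mono hhalf_top (hg_le s hs)
      rwa [hhalfR] at this
    have hgnn : (0:ℝ) ≤ (g s).toReal := ENNReal.toReal_nonneg
    have hIeq : I ((ν s).toReal) = I ((g s).toReal) := by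
      rw [htr]; exact hIsym _ ⟨hgnn, by linarith⟩
    have h3 : c * (g s).toReal ≤ I ((g s).toReal) := by
      rw [hcdef]; exact concave_chord hMpos hIconc hI0 hgnn hgle
    calc ENNReal.ofReal c * g s = ENNReal.ofReal (c * (g s).toReal) := by
          rw [ENNReal.ofReal_mul hcpos.le, ENNReal.ofReal_toReal (hg_top s)]
      _ ≤ ENNReal.ofReal (I ((g s).toReal)) := ENNReal.ofReal_le_ofReal h3
      _ = _ := by rw [hIeq]
  -- the layer-cake representation of ∫ |f - m|
  have habs_int : Integrable (fun x => |f x - m|) μ := (hfint.sub (integrable_const m)).abs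
  have hX0 : 0 ≤ ∫ x, |f x - m| ∂μ := integral_nonneg fun x => abs_nonneg _
  have hA : ENNReal.ofReal (∫ x, |f x - m| ∂μ) = ∫⁻ t in Ioi (0:ℝ), μ {x | t < |f x - m|} := by
    rw [MeasureTheory.ofReal_integral_eq_lintegral_ofReal habs_int
      (Eventually.of_forall fun x => abs_nonneg _)]
    exact lintegral_eq_lintegral_meas_lt μ (Eventually.of_forall fun x => abs_nonneg _)
      ((hfmeas.sub measurable_const).abs.aemeasurable)
  have hsplit : ∀ t : ℝ, t ∈ Ioi (0:ℝ) →
      μ {x | t < |f x - m|} = ν (m + t) + μ {x | f x < m - t} := by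
    intro t ht
    rw [mem_Ioi] at ht
    have hset : {x | t < |f x - m|} = {x | m + t < f x} ∪ {x | f x < m - t} := by
      ext x
      simp only [mem_setOf_eq, mem_union, lt_abs]
      constructor
      · rintro (h | h)
        · left; linarith
        · right; linarith
      · rintro (h | h)
        · left; linarith
        · right; linarith
    have hdisj : Disjoint {x | m + t < f x} {x | f x < m - t} := by
      rw [Set.disjoint_left]
      intro x hx₁ hx₂
      simp only [mem_setOf_eq] at hx₁ hx₂
      linarith
    rw [hset, measure_union hdisj (hfmeas measurableSet_Iio)]
  have htrans1 : ∫⁻ t in Ioi (0:ℝ), ν (m + t) = ∫⁻ s in Ioi m, ν s := by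
    have hp : MeasurePreserving (fun t : ℝ => m + t) volume volume :=
      measurePreserving_add_left volume m
    have he : MeasurableEmbedding (fun t : ℝ => m + t) := measurableEmbedding_addLeft m
    have hpre : (fun t : ℝ => m + t) ⁻¹' (Ioi m) = Ioi (0:ℝ) := by
      ext t; simp [lt_add_iff_pos_right]
    rw [← hpre, hp.setLIntegral_comp_preimage_emb he]
  have htrans2 : ∫⁻ t in Ioi (0:ℝ), g (m - t) = ∫⁻ s in Iio m, g s := by
    have hp : MeasurePreserving (fun t : ℝ => m - t) volume volume := by
      simpa [sub_eq_add_neg, Function.comp_def] using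
        (measurePreserving_add_left volume m).comp
          (Measure.measurePreserving_neg (volume : Measure ℝ))
    have he : MeasurableEmbedding (fun t : ℝ => m - t) :=
      (MeasurableEquiv.subLeft m).measurableEmbedding
    have hpre : (fun t : ℝ => m - t) ⁻¹' (Iio m) = Ioi (0:ℝ) := by
      ext t; simp [sub_lt_self_iff]
    rw [← hpre, hp.setLIntegral_comp_preimage_emb he]
  have hchain : ENNReal.ofReal (∫ x, |f x - m| ∂μ) ≤
      (∫⁻ s in Ioi m, ν s) + ∫⁻ s in Iio m, g s := by
    rw [hA]
    calc ∫⁻ t in Ioi (0:ℝ), μ {x | t < |f x - m|}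
        = ∫⁻ t in Ioi (0:ℝ), (ν (m + t) + μ {x | f x < m - t}) :=
          setLIntegral_congr_fun measurableSet_Ioi (fun t ht => hsplit t ht)
      _ = (∫⁻ t in Ioi (0:ℝ), ν (m + t)) + ∫⁻ t in Ioi (0:ℝ), μ {x | f x < m - t} :=
          lintegral_add_left (hν_meas.comp (measurable_const_add m)) _
      _ ≤ (∫⁻ t in Ioi (0:ℝ), ν (m + t)) + ∫⁻ t in Ioi (0:ℝ), g (m - t) := by
          refine add_le_add_right (lintegral_mono fun t => ?_) _
          refine measure_mono fun x hx => ?_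
          simp only [mem_setOf_eq] at hx ⊢
          exact le_of_lt hx
      _ = _ := by rw [htrans1, htrans2]
  have hG0 : 0 ≤ ∫ x, gradMod f x ∂μ := integral_nonneg fun x => gradMod_nonneg' hlip x
  have hkey : ENNReal.ofReal (c * ∫ x, |f x - m| ∂μ) ≤
      ENNReal.ofReal (∫ x, gradMod f x ∂μ) := by
    rw [ENNReal.ofReal_mul hcpos.le]
    calc ENNReal.ofReal c * ENNReal.ofReal (∫ x, |f x - m| ∂μ)
        ≤ ENNReal.ofReal c * ((∫⁻ s in Ioi m, ν s) + ∫⁻ s in Iio m, g s) :=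
          mul_le_mul_right hchain _
      _ = (∫⁻ s in Ioi m, ENNReal.ofReal c * ν s) +
            ∫⁻ s in Iio m, ENNReal.ofReal c * g s := by
          rw [mul_add, lintegral_const_mul _ hν_meas, lintegral_const_mul _ hg_meas]
      _ ≤ (∫⁻ s in Ioi m, ENNReal.ofReal (I ((ν s).toReal))) +
            ∫⁻ s in Iio m, ENNReal.ofReal (I ((ν s).toReal)) :=
          add_le_add (setLIntegral_mono' measurableSet_Ioi hbound1)
            (setLIntegral_mono' measurableSet_Iio hbound2)
      _ = ∫⁻ s in Ioi m ∪ Iio m, ENNReal.ofReal (I ((ν s).toReal)) :=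
          (lintegral_union measurableSet_Iio
            (Set.disjoint_left.mpr fun x hx₁ hx₂ => (lt_asymm hx₁) hx₂)).symm
      _ ≤ ∫⁻ s, ENNReal.ofReal (I ((ν s).toReal)) := setLIntegral_le_lintegral _ _
      _ ≤ _ := hcoarea
  have hreal : c * ∫ x, |f x - m| ∂μ ≤ ∫ x, gradMod f x ∂μ :=
    (ENNReal.ofReal_le_ofReal_iff hG0).mp hkey
  -- from median to mean
  set G := ∫ x, gradMod f x ∂μ with hGdef
  set X := ∫ x, |f x - m| ∂μ with hXdef
  set avg := (∫ y, f y ∂μ) / M with havg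
  have havg_int : Integrable (fun x => |f x - avg|) μ := (hfint.sub (integrable_const avg)).abs
  have h1 : ∫ x, |f x - avg| ∂μ ≤ X + M * |m - avg| := by
    have hle : ∀ x, |f x - avg| ≤ |f x - m| + |m - avg| := fun x => by
      have he : f x - avg = (f x - m) + (m - avg) := by ring
      rw [he]; exact abs_add_le _ _
    calc ∫ x, |f x - avg| ∂μ ≤ ∫ x, (|f x - m| + |m - avg|) ∂μ :=
        integral_mono havg_int (habs_int.add (integrable_const _)) hle
      _ = X + M * |m - avg| := by
        rw [integral_add habs_int (integrable_const _), integral_const, smul_eq_mul]; rfl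
  have h2 : M * |m - avg| ≤ X := by
    have e1 : ∫ x, (f x - m) ∂μ = (∫ x, f x ∂μ) - M * m := by
      rw [integral_sub hfint (integrable_const m), integral_const, smul_eq_mul]; rfl
    have e2 : M * (m - avg) = M * m - ∫ x, f x ∂μ := by
      have hMavg : M * avg = ∫ x, f x ∂μ := by
        rw [havg]; field_simp
      rw [mul_sub, hMavg]
    have e3 : M * |m - avg| = |∫ x, (f x - m) ∂μ| := by
      rw [← abs_of_pos hMpos, ← abs_mul, e2, e1, abs_sub_comm]
    rw [e3, hXdef]
    have := norm_integral_le_integral_norm (μ := μ) (fun x => f x - m)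
    simpa [Real.norm_eq_abs] using this
  have h4 : ∫ x, |f x - avg| ∂μ ≤ 2 * X := by linarith
  have h5 : M * (c * X) ≤ M * G := mul_le_mul_of_nonneg_left hreal hMpos.le
  have h6 : M * (c * X) = 2 * I (M / 2) * X := by
    rw [hcdef]; field_simp; try ring
  rw [div_mul_eq_mul_div, le_div_iff₀ hIhalf]
  nlinarith [mul_le_mul_of_nonneg_right h4 hIhalf.le, h5, h6]
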